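/- Let R be an associative ring, G a groupoid, and α = (D_g, α_g)_{g∈G} a partial action of G on R such that D_g is s-unital for every g ∈ G and R = ⊕_{e∈G₀} D_e. Then: (i) if R ⋊_α G is prime, then R is G-prime; (ii) if α has the intersection property, then R is G-prime if, and only if, R ⋊_α G is prime; (iii) R is G-simple and α has the intersection property if, and only if, R ⋊_α G is simple. -/

import Mathlib

open scoped Classical

/-- A (discrete) groupoid, presented as its set of morphisms `G`, with source map `s`,
range map `r`, inversion `inv` and a partially defined multiplication `mul`.
The units (identity morphisms, i.e. the objects) are the elements `e` with `r e = e`. -/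
structure DGroupoid (G : Type*) where
  s : G → G
  r : G → G
  inv : G → G
  mul : (g h : G) → s g = r h → G
  s_inv : ∀ g, s (inv g) = r g
  r_inv : ∀ g, r (inv g) = s g
  inv_inv : ∀ g, inv (inv g) = g
  r_mul : ∀ g h (p : s g = r h), r (mul g h p) = r g
  s_mul : ∀ g h (p : s g = r h), s (mul g h p) = s h
  r_idem : ∀ g, r (r g) = r g
  s_of_r : ∀ g, s (r g) = r g
  r_of_s : ∀ g, r (s g) = s g
  s_idem : ∀ g, s (s g) = s g
  assoc : ∀ g h k (p : s g = r h) (q : s h = r k) (pq : s (mul g h p) = r k)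
      (qp : s g = r (mul h k q)), mul (mul g h p) k pq = mul g (mul h k q) qp
  id_mul : ∀ g (p : s (r g) = r g), mul (r g) g p = g
  mul_id : ∀ g (p : s g = r (s g)), mul g (s g) p = g
  mul_inv : ∀ g (p : s g = r (inv g)), mul g (inv g) p = r g
  inv_mul : ∀ g (p : s (inv g) = r g), mul (inv g) g p = s g

namespace DGroupoid

/-- `e` is a unit (an object, identified with its identity morphism) of the groupoid. -/
def unit {G : Type*} (𝔾 : DGroupoid G) (e : G) : Prop := 𝔾.r e = e

end DGroupoid

section RingDefs

variable {R : Type*} [NonUnitalRing R]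

/-- A subset of a (possibly non-unital) ring is a two-sided ideal. -/
def IsRingIdeal (J : Set R) : Prop :=
  (0 : R) ∈ J ∧ (∀ x ∈ J, ∀ y ∈ J, x + y ∈ J) ∧ (∀ x ∈ J, -x ∈ J) ∧
    ∀ x ∈ J, ∀ y : R, x * y ∈ J ∧ y * x ∈ J

/-- A subset of a ring, viewed as a ring, is s-unital: every `x` in it lies in
`xT ∩ Tx`. -/
def IsSUnitalSet (J : Set R) : Prop :=
  ∀ x ∈ J, (∃ u ∈ J, x * u = x) ∧ (∃ v ∈ J, v * x = x)

end RingDefs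

/-- A partial action `α = (D_g, α_g)_{g ∈ G}` of a groupoid `𝔾` on a
(possibly non-unital, associative) ring `R`:  each `D_{r g}` is a two-sided ideal of `R`,
each `D_g` is a two-sided ideal of `D_{r g}`, and `α_g = act g` restricts to a ring
isomorphism `D_{g⁻¹} → D_g` (the function `act g` is arbitrary outside `D_{g⁻¹}`),
satisfying the axioms of a partial action. -/
structure PartialAction {G : Type*} (𝔾 : DGroupoid G) (R : Type*) [NonUnitalRing R] where
  D : G → Set R
  zero_mem : ∀ g, (0 : R) ∈ D g
  add_mem : ∀ g, ∀ x ∈ D g, ∀ y ∈ D g, x + y ∈ D g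
  neg_mem : ∀ g, ∀ x ∈ D g, -x ∈ D g
  subset_r : ∀ g, D g ⊆ D (𝔾.r g)
  idealR : ∀ g, IsRingIdeal (D (𝔾.r g))
  idealInR : ∀ g, ∀ x ∈ D g, ∀ y ∈ D (𝔾.r g), x * y ∈ D g ∧ y * x ∈ D g
  act : G → R → R
  act_mem : ∀ g, ∀ x ∈ D (𝔾.inv g), act g x ∈ D g
  act_add : ∀ g, ∀ x ∈ D (𝔾.inv g), ∀ y ∈ D (𝔾.inv g), act g (x + y) = act g x + act g y
  act_mul : ∀ g, ∀ x ∈ D (𝔾.inv g), ∀ y ∈ D (𝔾.inv g), act g (x * y) = act g x * act g y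
  act_inv : ∀ g, ∀ x ∈ D (𝔾.inv g), act (𝔾.inv g) (act g x) = x
  act_unit : ∀ e, 𝔾.unit e → ∀ x ∈ D e, act e x = x
  act_comp_mem : ∀ g h (p : 𝔾.s g = 𝔾.r h), ∀ x, x ∈ D (𝔾.inv g) → x ∈ D h →
      act (𝔾.inv h) x ∈ D (𝔾.inv (𝔾.mul g h p))
  act_comp : ∀ g h (p : 𝔾.s g = 𝔾.r h), ∀ x ∈ D (𝔾.inv h), act h x ∈ D (𝔾.inv g) →
      act g (act h x) = act (𝔾.mul g h p) x

namespace PartialAction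

variable {G : Type*} {R : Type*} [NonUnitalRing R] {𝔾 : DGroupoid G} (P : PartialAction 𝔾 R)

/-- `R = ⊕_{e ∈ G₀} D_e`: every element of `R` decomposes as a finite sum of elements
of the `D_e` (`e` a unit), and the decomposition is unique (a finite sum of elements of
the distinct `D_e`'s which vanishes has all terms zero). -/
def directSum : Prop :=
  (∀ x : R, ∃ f : G →₀ R, (∀ g ∈ f.support, 𝔾.unit g) ∧ (∀ g, f g ∈ P.D g) ∧
      (f.sum fun _ v => v) = x) ∧
    ∀ f : G →₀ R, (∀ g ∈ f.support, 𝔾.unit g) → (∀ g, f g ∈ P.D g) →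
      (f.sum fun _ v => v) = 0 → f = 0

/-- The carrier of the partial skew groupoid ring `R ⋊_α G`: finitely supported
functions `a : G →₀ R` (thought of as `Σ_g a_g δ_g`) with `a g ∈ D g`. -/
def carrier : Set (G →₀ R) := {a | ∀ g, a g ∈ P.D g}

/-- The multiplication of the partial skew groupoid ring:
`(a_g δ_g)(b_h δ_h) = α_g(α_{g⁻¹}(a_g) b_h) δ_{gh}` when `(g,h)` is composable,
and `0` otherwise. -/
noncomputable def skewMul (a b : G →₀ R) : G →₀ R :=
  a.support.sum fun g => b.support.sum fun h =>
    if p : 𝔾.s g = 𝔾.r h then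
      Finsupp.single (𝔾.mul g h p) (P.act g (P.act (𝔾.inv g) (a g) * b h))
    else 0

/-- The subset `⊕_{e ∈ G₀} D_e δ_e` of `R ⋊_α G`: elements supported on units. -/
def diag : Set (G →₀ R) := {a | (∀ g, a g ∈ P.D g) ∧ ∀ g ∈ a.support, 𝔾.unit g}

/-- `I` is a two-sided ideal of the partial skew groupoid ring `R ⋊_α G`. -/
def IsSkewIdeal (I : Set (G →₀ R)) : Prop :=
  I ⊆ P.carrier ∧ (0 : G →₀ R) ∈ I ∧ (∀ x ∈ I, ∀ y ∈ I, x + y ∈ I) ∧ (∀ x ∈ I, -x ∈ I) ∧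
    ∀ x ∈ I, ∀ y ∈ P.carrier, P.skewMul x y ∈ I ∧ P.skewMul y x ∈ I

/-- The projection `P₀ : R ⋊_α G → R`, `Σ_g a_g δ_g ↦ Σ_{e ∈ G₀} a_e`. -/
noncomputable def P0 (_P : PartialAction 𝔾 R) (a : G →₀ R) : R :=
  a.sum fun g v => if 𝔾.unit g then v else 0

/-- An ideal `I` of `R ⋊_α G` is `G`-graded if it is generated by its homogeneous
components, i.e. `I = ⊕_g (I ∩ D_g δ_g)`. -/
def IsGradedIdeal (I : Set (G →₀ R)) : Prop :=
  P.IsSkewIdeal I ∧ ∀ a ∈ I, ∀ g : G, Finsupp.single g (a g) ∈ I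

/-- `J` is a `G`-invariant (two-sided) ideal of `R`: `α_g(D_{g⁻¹} ∩ J) ⊆ J`. -/
def IsInvIdeal (J : Set R) : Prop :=
  IsRingIdeal J ∧ ∀ g, ∀ x ∈ P.D (𝔾.inv g) ∩ J, P.act g x ∈ J

/-- The subset `J ⋊_{α^J} G = ⊕_g (J ∩ D_g) δ_g` of `R ⋊_α G` attached to a
`G`-invariant ideal `J` of `R`. -/
def skewOf (J : Set R) : Set (G →₀ R) := {a | ∀ g, a g ∈ P.D g ∩ J}

/-- `⊕_{e ∈ G₀} D_e δ_e` is a maximal commutative subring of `R ⋊_α G`: it is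
commutative and coincides with its centralizer. -/
def IsMaxCommDiag : Prop :=
  (∀ a ∈ P.diag, ∀ b ∈ P.diag, P.skewMul a b = P.skewMul b a) ∧
    ∀ b ∈ P.carrier, (∀ a ∈ P.diag, P.skewMul a b = P.skewMul b a) → b ∈ P.diag

/-- The partial action has the intersection property: every nonzero ideal of
`R ⋊_α G` intersects `⊕_{e ∈ G₀} D_e δ_e` nontrivially. -/
def HasIntersectionProperty : Prop :=
  ∀ I : Set (G →₀ R), P.IsSkewIdeal I → I ≠ {0} → I ∩ P.diag ≠ {0}

/-- `R` is `G`-simple: the only `G`-invariant ideals of `R` are `{0}` and `R`. -/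
def GSimple : Prop := ∀ J : Set R, P.IsInvIdeal J → J = {0} ∨ J = Set.univ

/-- `R` is `G`-prime: if `I, J` are `G`-invariant ideals with `IJ = {0}`, then
`I = {0}` or `J = {0}`. -/
def GPrime : Prop :=
  ∀ I J : Set R, P.IsInvIdeal I → P.IsInvIdeal J →
    (∀ x ∈ I, ∀ y ∈ J, x * y = 0) → I = {0} ∨ J = {0}

/-- `R ⋊_α G` is graded simple. -/
def GradedSimple : Prop :=
  ∀ I : Set (G →₀ R), P.IsGradedIdeal I → I = {0} ∨ I = P.carrier

/-- `R ⋊_α G` is graded prime. -/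
def GradedPrime : Prop :=
  ∀ I J : Set (G →₀ R), P.IsGradedIdeal I → P.IsGradedIdeal J →
    (∀ x ∈ I, ∀ y ∈ J, P.skewMul x y = 0) → I = {0} ∨ J = {0}

/-- `R ⋊_α G` is a prime ring. -/
def SkewPrime : Prop :=
  ∀ I J : Set (G →₀ R), P.IsSkewIdeal I → P.IsSkewIdeal J →
    (∀ x ∈ I, ∀ y ∈ J, P.skewMul x y = 0) → I = {0} ∨ J = {0}

/-- `R ⋊_α G` is a simple ring. -/
def SkewSimple : Prop :=
  ∀ I : Set (G →₀ R), P.IsSkewIdeal I → I = {0} ∨ I = P.carrier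

end PartialAction

section Aux

namespace DGroupoid

variable {G : Type*} (𝔾 : DGroupoid G)

theorem mul_congr {g g' h h' : G} (p : 𝔾.s g = 𝔾.r h) (p' : 𝔾.s g' = 𝔾.r h')
    (hg : g = g') (hh : h = h') : 𝔾.mul g h p = 𝔾.mul g' h' p' := by
  subst hg; subst hh; rfl

theorem unit_s {e : G} (h : 𝔾.unit e) : 𝔾.s e = e := by
  have := 𝔾.s_of_r e
  rw [h] at this
  rw [this]

theorem unit_r {e : G} (h : 𝔾.unit e) : 𝔾.r e = e := h

theorem unit_of_r (g : G) : 𝔾.unit (𝔾.r g) := 𝔾.r_idem g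

theorem unit_of_s (g : G) : 𝔾.unit (𝔾.s g) := 𝔾.r_of_s g

theorem unit_inv {e : G} (h : 𝔾.unit e) : 𝔾.inv e = e := by
  have hre : 𝔾.r (𝔾.inv e) = e := by rw [𝔾.r_inv, 𝔾.unit_s h]
  have p1 : 𝔾.s (𝔾.r (𝔾.inv e)) = 𝔾.r (𝔾.inv e) := 𝔾.s_of_r _
  have h1 := 𝔾.id_mul (𝔾.inv e) p1
  have p2 : 𝔾.s e = 𝔾.r (𝔾.inv e) := by rw [hre, 𝔾.unit_s h]
  have h2 := 𝔾.mul_inv e p2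
  have := 𝔾.mul_congr p1 p2 hre rfl
  rw [this, h2] at h1
  rw [← h1, h]

theorem unit_mul {e : G} (h : 𝔾.unit e) (p : 𝔾.s e = 𝔾.r e) : 𝔾.mul e e p = e := by
  have p1 : 𝔾.s (𝔾.r e) = 𝔾.r e := 𝔾.s_of_r _
  have h1 := 𝔾.id_mul e p1
  rw [𝔾.mul_congr p1 p h rfl] at h1
  exact h1

end DGroupoid

end Aux
section Aux2

theorem sum_mem_set {M : Type*} [AddCommMonoid M] {C : Set M} (h0 : (0:M) ∈ C)
    (hadd : ∀ x ∈ C, ∀ y ∈ C, x + y ∈ C) {ι : Type*} (s : Finset ι) (f : ι → M)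
    (h : ∀ i ∈ s, f i ∈ C) : s.sum f ∈ C := by
  classical
  induction s using Finset.induction with
  | empty => simpa using h0
  | insert _ _ hx ih =>
    rw [Finset.sum_insert hx]
    exact hadd _ (h _ (Finset.mem_insert_self _ _)) _
      (ih fun i hi => h i (Finset.mem_insert_of_mem hi))

/-- The total-sum additive map `Σ_g a_g δ_g ↦ Σ_g a_g`. -/
noncomputable def Tsum (G R : Type*) [NonUnitalRing R] : (G →₀ R) →+ R where
  toFun f := f.sum fun _ v => v
  map_zero' := Finsupp.sum_zero_index
  map_add' a b := by
    show (a + b).sum (fun _ v => v) = _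
    exact Finsupp.sum_add_index' (fun _ => rfl) (fun _ _ _ => rfl)

theorem Tsum_apply {G R : Type*} [NonUnitalRing R] (f : G →₀ R) :
    Tsum G R f = f.sum fun _ v => v := rfl

theorem Tsum_single {G R : Type*} [NonUnitalRing R] (g : G) (x : R) :
    Tsum G R (Finsupp.single g x) = x := by
  show (Finsupp.single g x).sum (fun _ v => v) = x
  exact Finsupp.sum_single_index rfl

namespace PartialAction

variable {G R : Type*} [NonUnitalRing R] {𝔾 : DGroupoid G} (P : PartialAction 𝔾 R)

theorem act_zero (g : G) : P.act g 0 = 0 := by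
  have h := P.act_add g 0 (P.zero_mem _) 0 (P.zero_mem _)
  rw [add_zero] at h
  have h2 : P.act g 0 + 0 = P.act g 0 + P.act g 0 := by rw [add_zero, ← h]
  exact (add_left_cancel h2).symm

theorem act_mem' (g : G) {x : R} (hx : x ∈ P.D g) : P.act (𝔾.inv g) x ∈ P.D (𝔾.inv g) :=
  P.act_mem (𝔾.inv g) x (by rw [𝔾.inv_inv]; exact hx)

theorem act_inv' (g : G) {x : R} (hx : x ∈ P.D g) : P.act g (P.act (𝔾.inv g) x) = x := by
  have := P.act_inv (𝔾.inv g) x (by rw [𝔾.inv_inv]; exact hx)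
  rwa [𝔾.inv_inv] at this

theorem sub_mem_D (g : G) {x y : R} (hx : x ∈ P.D g) (hy : y ∈ P.D g) : x - y ∈ P.D g := by
  rw [sub_eq_add_neg]
  exact P.add_mem g x hx _ (P.neg_mem g y hy)

theorem decomp_unique (hds : P.directSum) {e : G} (he : 𝔾.unit e) {x : R} (hx : x ∈ P.D e)
    (f : G →₀ R) (h1 : ∀ g ∈ f.support, 𝔾.unit g) (h2 : ∀ g, f g ∈ P.D g)
    (h3 : Tsum G R f = x) : f = Finsupp.single e x := by
  have key := hds.2 (f - Finsupp.single e x) ?_ ?_ ?_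
  · exact sub_eq_zero.mp key
  · intro g hg
    have hg' := Finsupp.support_sub hg
    rcases Finset.mem_union.mp hg' with h | h
    · exact h1 g h
    · have := Finsupp.support_single_subset h
      rw [Finset.mem_singleton] at this
      rw [this]; exact he
  · intro g
    rw [Finsupp.sub_apply]
    refine P.sub_mem_D g (h2 g) ?_
    rcases eq_or_ne g e with rfl | hne
    · rw [Finsupp.single_eq_same]; exact hx
    · rw [Finsupp.single_eq_of_ne' (Ne.symm hne)]; exact P.zero_mem g
  · show (f - Finsupp.single e x).sum (fun _ v => v) = 0
    have : Tsum G R (f - Finsupp.single e x) = 0 := by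
      rw [map_sub, h3, Tsum_single, sub_self]
    exact this

theorem D_disjoint (hds : P.directSum) {e f : G} (he : 𝔾.unit e) (hf : 𝔾.unit f)
    (hef : e ≠ f) {x : R} (hxe : x ∈ P.D e) (hxf : x ∈ P.D f) : x = 0 := by
  have h := P.decomp_unique hds he hxe (Finsupp.single f x) ?_ ?_ (Tsum_single f x)
  · have := congrArg (fun u : G →₀ R => u f) h
    simp only [Finsupp.single_eq_same] at this
    rw [this, Finsupp.single_eq_of_ne' hef]
  · intro g hg
    have := Finsupp.support_single_subset hg
    rw [Finset.mem_singleton] at this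
    rw [this]; exact hf
  · intro g
    rcases eq_or_ne g f with rfl | hne
    · rw [Finsupp.single_eq_same]; exact hxf
    · rw [Finsupp.single_eq_of_ne' (Ne.symm hne)]; exact P.zero_mem g

theorem prod_mem (g h : G) (p : 𝔾.s g = 𝔾.r h) {x y : R} (hx : x ∈ P.D g) (hy : y ∈ P.D h) :
    P.act (𝔾.inv g) x * y ∈ P.D (𝔾.inv g) ∧ P.act (𝔾.inv g) x * y ∈ P.D h := by
  have ha : P.act (𝔾.inv g) x ∈ P.D (𝔾.inv g) := P.act_mem' g hx
  have hrinv : 𝔾.r (𝔾.inv g) = 𝔾.r h := by rw [𝔾.r_inv, p]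
  constructor
  · have hy' : y ∈ P.D (𝔾.r (𝔾.inv g)) := by rw [hrinv]; exact P.subset_r h hy
    exact (P.idealInR (𝔾.inv g) _ ha y hy').1
  · have ha' : P.act (𝔾.inv g) x ∈ P.D (𝔾.r h) := by
      rw [← hrinv]; exact P.subset_r _ ha
    exact (P.idealInR h y hy _ ha').2

theorem skew_coeff_mem (g h : G) (p : 𝔾.s g = 𝔾.r h) {z : R}
    (hz1 : z ∈ P.D (𝔾.inv g)) (hz2 : z ∈ P.D h) :
    P.act g z ∈ P.D (𝔾.mul g h p) := by
  have hy : P.act (𝔾.inv h) z ∈ P.D (𝔾.inv (𝔾.mul g h p)) := P.act_comp_mem g h p z hz1 hz2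
  have hy' : P.act (𝔾.inv h) z ∈ P.D (𝔾.inv h) := P.act_mem' h hz2
  have hzz : P.act h (P.act (𝔾.inv h) z) = z := P.act_inv' h hz2
  have hcomp := P.act_comp g h p (P.act (𝔾.inv h) z) hy' (by rw [hzz]; exact hz1)
  rw [hzz] at hcomp
  rw [hcomp]
  exact P.act_mem _ _ hy

theorem skewMul_single (g h : G) (x y : R) :
    P.skewMul (Finsupp.single g x) (Finsupp.single h y) =
      if p : 𝔾.s g = 𝔾.r h then
        Finsupp.single (𝔾.mul g h p) (P.act g (P.act (𝔾.inv g) x * y)) else 0 := by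
  by_cases hx : x = 0
  · subst hx
    rw [P.act_zero, zero_mul, P.act_zero]
    simp [skewMul]
  by_cases hy : y = 0
  · subst hy
    rw [mul_zero, P.act_zero]
    simp [skewMul, Finsupp.support_single_ne_zero _ hx]
  · unfold skewMul
    rw [Finsupp.support_single_ne_zero _ hx, Finsupp.support_single_ne_zero _ hy,
      Finset.sum_singleton, Finset.sum_singleton, Finsupp.single_eq_same,
      Finsupp.single_eq_same]

theorem skewMul_eq_sum (a b : G →₀ R) :
    P.skewMul a b = a.support.sum fun g => b.support.sum fun h =>
      P.skewMul (Finsupp.single g (a g)) (Finsupp.single h (b h)) := by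
  rw [show P.skewMul a b = a.support.sum (fun g => b.support.sum fun h =>
    if p : 𝔾.s g = 𝔾.r h then
      Finsupp.single (𝔾.mul g h p) (P.act g (P.act (𝔾.inv g) (a g) * b h)) else 0) from rfl]
  exact Finset.sum_congr rfl fun g _ => Finset.sum_congr rfl fun h _ =>
    (P.skewMul_single g h (a g) (b h)).symm

end PartialAction

end Aux2
section Aux3

theorem DGroupoid.unit.eq {G : Type*} {𝔾 : DGroupoid G} {e : G} (h : 𝔾.unit e) :
    𝔾.r e = e := h

namespace PartialAction

variable {G R : Type*} [NonUnitalRing R] {𝔾 : DGroupoid G} (P : PartialAction 𝔾 R)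

theorem D_mul_mem {e : G} (he : 𝔾.unit e) {x : R} (hx : x ∈ P.D e) (y : R) :
    x * y ∈ P.D e ∧ y * x ∈ P.D e := by
  have h := (P.idealR e).2.2.2
  rw [he.eq] at h
  exact h x hx y

theorem single_mem_diag {e : G} (he : 𝔾.unit e) {x : R} (hx : x ∈ P.D e) :
    Finsupp.single e x ∈ P.diag := by
  constructor
  · intro g
    rcases eq_or_ne g e with rfl | hne
    · rw [Finsupp.single_eq_same]; exact hx
    · rw [Finsupp.single_eq_of_ne' (Ne.symm hne)]; exact P.zero_mem g
  · intro g hg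
    have := Finsupp.support_single_subset hg
    rw [Finset.mem_singleton] at this
    rw [this]; exact he

theorem single_mem_carrier {g : G} {x : R} (hx : x ∈ P.D g) :
    Finsupp.single g x ∈ P.carrier := by
  intro k
  rcases eq_or_ne k g with rfl | hne
  · rw [Finsupp.single_eq_same]; exact hx
  · rw [Finsupp.single_eq_of_ne' (Ne.symm hne)]; exact P.zero_mem k

theorem diag_zero : (0 : G →₀ R) ∈ P.diag := by
  refine ⟨fun g => P.zero_mem g, fun g hg => ?_⟩
  simp at hg

theorem diag_add {a b : G →₀ R} (ha : a ∈ P.diag) (hb : b ∈ P.diag) : a + b ∈ P.diag := by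
  constructor
  · intro g
    rw [Finsupp.add_apply]
    exact P.add_mem g _ (ha.1 g) _ (hb.1 g)
  · intro g hg
    rcases Finset.mem_union.mp (Finsupp.support_add hg) with h | h
    · exact ha.2 g h
    · exact hb.2 g h

theorem diag_neg {a : G →₀ R} (ha : a ∈ P.diag) : -a ∈ P.diag := by
  constructor
  · intro g
    rw [Finsupp.neg_apply]
    exact P.neg_mem g _ (ha.1 g)
  · intro g hg
    rw [Finsupp.support_neg] at hg
    exact ha.2 g hg

theorem skewMul_single_units {e f : G} (he : 𝔾.unit e) (hf : 𝔾.unit f)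
    (x y : R) (hx : x ∈ P.D e) :
    P.skewMul (Finsupp.single e x) (Finsupp.single f y) =
      if e = f then Finsupp.single e (x * y) else 0 := by
  rw [P.skewMul_single]
  by_cases hef : e = f
  · subst hef
    have p : 𝔾.s e = 𝔾.r e := by rw [𝔾.unit_s he, he.eq]
    rw [dif_pos p, if_pos rfl, 𝔾.unit_mul he p, 𝔾.unit_inv he, P.act_unit e he x hx,
      P.act_unit e he _ (P.D_mul_mem he hx y).1]
  · rw [if_neg hef, dif_neg]
    intro p
    exact hef (by rw [← 𝔾.unit_s he, p, hf.eq])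

theorem skewMul_diag {a b : G →₀ R} (ha : a ∈ P.diag) (hb1 : ∀ g, b g ∈ P.D g)
    (hb2 : ∀ g ∈ b.support, 𝔾.unit g) :
    P.skewMul a b = a.support.sum fun e => Finsupp.single e (a e * b e) := by
  rw [P.skewMul_eq_sum]
  refine Finset.sum_congr rfl fun e hea => ?_
  have he := ha.2 e hea
  have hae := ha.1 e
  rw [Finset.sum_eq_single e (fun f hf hfe => ?_) (fun hne => ?_)]
  · rw [P.skewMul_single_units he he _ _ hae, if_pos rfl]
  · rw [P.skewMul_single_units he (hb2 f hf) _ _ hae, if_neg (Ne.symm hfe)]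
  · rw [P.skewMul_single_units he he _ _ hae, if_pos rfl,
      Finsupp.notMem_support_iff.mp hne, mul_zero, Finsupp.single_zero]

theorem Tsum_mul (hds : P.directSum) {a b : G →₀ R} (ha : a ∈ P.diag) (hb : b ∈ P.diag) :
    Tsum G R (P.skewMul a b) = Tsum G R a * Tsum G R b := by
  rw [P.skewMul_diag ha hb.1 hb.2, map_sum,
    show Tsum G R a = a.support.sum (fun e => a e) from rfl,
    show Tsum G R b = b.support.sum (fun f => b f) from rfl, Finset.sum_mul_sum]
  refine Finset.sum_congr rfl fun e hea => ?_
  rw [Tsum_single]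
  refine (Finset.sum_eq_single (f := fun f => a e * b f) e (fun f hf hfe => ?_) (fun hne => ?_)).symm
  · exact P.D_disjoint hds (ha.2 e hea) (hb.2 f hf) (Ne.symm hfe)
      (P.D_mul_mem (ha.2 e hea) (ha.1 e) (b f)).1
      (P.D_mul_mem (hb.2 f hf) (hb.1 f) (a e)).2
  · show a e * b e = 0
    rw [Finsupp.notMem_support_iff.mp hne, mul_zero]

end PartialAction

end Aux3
section Aux4

namespace PartialAction

variable {G R : Type*} [NonUnitalRing R] {𝔾 : DGroupoid G} (P : PartialAction 𝔾 R)

/-- The image in `R` of the diagonal part of an ideal of the skew ring. -/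
def liftIdeal (I : Set (G →₀ R)) : Set R := {x | ∃ a, a ∈ I ∧ a ∈ P.diag ∧ Tsum G R a = x}

theorem decomp_exists (hds : P.directSum) (x : R) :
    ∃ f : G →₀ R, f ∈ P.diag ∧ Tsum G R f = x := by
  obtain ⟨f, h1, h2, h3⟩ := hds.1 x
  exact ⟨f, ⟨h2, h1⟩, h3⟩

theorem single_mem_of_lift (hds : P.directSum) {I : Set (G →₀ R)} {x : R} {e : G}
    (he : 𝔾.unit e) (hx : x ∈ P.D e) (hxI : x ∈ P.liftIdeal I) :
    Finsupp.single e x ∈ I := by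
  obtain ⟨a, haI, had, hT⟩ := hxI
  rw [← P.decomp_unique hds he hx a had.2 had.1 hT]
  exact haI

theorem single_to_inv (hsu : ∀ g, IsSUnitalSet (P.D g)) {g : G} {x : R}
    (hx : x ∈ P.D (𝔾.inv g)) :
    ∃ w ∈ P.carrier, P.skewMul (Finsupp.single (𝔾.s g) x) w = Finsupp.single (𝔾.inv g) x := by
  obtain ⟨⟨u, hu, hxu⟩, -⟩ := hsu (𝔾.inv g) x hx
  refine ⟨Finsupp.single (𝔾.inv g) u, P.single_mem_carrier hu, ?_⟩
  have hxs : x ∈ P.D (𝔾.s g) := by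
    have := P.subset_r (𝔾.inv g) hx
    rwa [𝔾.r_inv] at this
  rw [P.skewMul_single]
  have p : 𝔾.s (𝔾.s g) = 𝔾.r (𝔾.inv g) := by rw [𝔾.s_idem, 𝔾.r_inv]
  rw [dif_pos p]
  have hm : 𝔾.mul (𝔾.s g) (𝔾.inv g) p = 𝔾.inv g := by
    have p1 : 𝔾.s (𝔾.r (𝔾.inv g)) = 𝔾.r (𝔾.inv g) := 𝔾.s_of_r _
    have h1 := 𝔾.id_mul (𝔾.inv g) p1
    rw [← 𝔾.mul_congr p1 p (𝔾.r_inv g) rfl]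
    exact h1
  rw [hm, 𝔾.unit_inv (𝔾.unit_of_s g), P.act_unit _ (𝔾.unit_of_s g) x hxs, hxu,
    P.act_unit _ (𝔾.unit_of_s g) x hxs]

theorem skew_act_single {g : G} {x u : R} (hx : x ∈ P.D (𝔾.inv g)) (hu : u ∈ P.D (𝔾.inv g))
    (hux : u * x = x) :
    P.skewMul (Finsupp.single g (P.act g u)) (Finsupp.single (𝔾.inv g) x)
      = Finsupp.single (𝔾.r g) (P.act g x) := by
  rw [P.skewMul_single]
  have p : 𝔾.s g = 𝔾.r (𝔾.inv g) := (𝔾.r_inv g).symm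
  rw [dif_pos p, 𝔾.mul_inv g p, P.act_inv g u hu, hux]

theorem lift_isInv (hsu : ∀ g, IsSUnitalSet (P.D g)) (hds : P.directSum)
    {I : Set (G →₀ R)} (hI : P.IsSkewIdeal I) : P.IsInvIdeal (P.liftIdeal I) := by
  obtain ⟨hIc, hI0, hIadd, hIneg, hImul⟩ := hI
  constructor
  · refine ⟨⟨0, hI0, P.diag_zero, map_zero _⟩, ?_, ?_, ?_⟩
    · rintro x ⟨a, haI, had, rfl⟩ y ⟨b, hbI, hbd, rfl⟩
      exact ⟨a + b, hIadd a haI b hbI, P.diag_add had hbd, map_add _ _ _⟩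
    · rintro x ⟨a, haI, had, rfl⟩
      exact ⟨-a, hIneg a haI, P.diag_neg had, map_neg _ _⟩
    · rintro x ⟨a, haI, had, rfl⟩ y
      obtain ⟨f, hfd, hfT⟩ := P.decomp_exists hds y
      constructor
      · refine ⟨P.skewMul a f, (hImul a haI f hfd.1).1, ?_,
          by rw [P.Tsum_mul hds had hfd, hfT]⟩
        rw [P.skewMul_diag had hfd.1 hfd.2]
        exact sum_mem_set P.diag_zero (fun x hx y hy => P.diag_add hx hy) _ _
          (fun e hea => P.single_mem_diag (had.2 e hea)
            (P.D_mul_mem (had.2 e hea) (had.1 e) (f e)).1)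
      · refine ⟨P.skewMul f a, (hImul a haI f hfd.1).2, ?_,
          by rw [P.Tsum_mul hds hfd had, hfT]⟩
        rw [P.skewMul_diag hfd had.1 had.2]
        exact sum_mem_set P.diag_zero (fun x hx y hy => P.diag_add hx hy) _ _
          (fun e hef => P.single_mem_diag (hfd.2 e hef)
            (P.D_mul_mem (hfd.2 e hef) (hfd.1 e) (a e)).1)
  · rintro g x ⟨hxD, xlift⟩
    have hxs : x ∈ P.D (𝔾.s g) := by
      have := P.subset_r (𝔾.inv g) hxD
      rwa [𝔾.r_inv] at this
    have h1 : Finsupp.single (𝔾.s g) x ∈ I :=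
      P.single_mem_of_lift hds (𝔾.unit_of_s g) hxs xlift
    obtain ⟨w, hw, hw2⟩ := P.single_to_inv hsu hxD
    have h2 : Finsupp.single (𝔾.inv g) x ∈ I := by
      rw [← hw2]; exact (hImul _ h1 w hw).1
    obtain ⟨-, u, hu, hux⟩ := hsu (𝔾.inv g) x hxD
    have h3 := P.skew_act_single hxD hu hux
    have h4 : Finsupp.single (𝔾.r g) (P.act g x) ∈ I := by
      rw [← h3]
      exact (hImul _ h2 (Finsupp.single g (P.act g u))
        (P.single_mem_carrier (P.act_mem g u hu))).2
    exact ⟨_, h4, P.single_mem_diag (𝔾.unit_of_r g) (P.subset_r g (P.act_mem g x hxD)),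
      Tsum_single _ _⟩

theorem lift_ne_bot (hds : P.directSum) {I : Set (G →₀ R)} (h0 : (0:G→₀R) ∈ I)
    (hne : I ∩ P.diag ≠ {0}) : P.liftIdeal I ≠ {0} := by
  have hex : ∃ a ∈ I ∩ P.diag, a ≠ 0 := by
    by_contra h
    push_neg at h
    exact hne (Set.eq_singleton_iff_unique_mem.mpr ⟨⟨h0, P.diag_zero⟩, h⟩)
  obtain ⟨a, ⟨haI, had⟩, hane⟩ := hex
  intro hcon
  have hmem : Tsum G R a ∈ P.liftIdeal I := ⟨a, haI, had, rfl⟩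
  rw [hcon] at hmem
  exact hane (hds.2 a had.2 had.1 (Set.mem_singleton_iff.mp hmem))

theorem lift_mul_zero (hds : P.directSum) {I J : Set (G →₀ R)}
    (hIJ : ∀ x ∈ I, ∀ y ∈ J, P.skewMul x y = 0) :
    ∀ x ∈ P.liftIdeal I, ∀ y ∈ P.liftIdeal J, x * y = 0 := by
  rintro x ⟨a, haI, had, rfl⟩ y ⟨b, hbJ, hbd, rfl⟩
  rw [← P.Tsum_mul hds had hbd, hIJ a haI b hbJ, map_zero]

theorem single_mem_skewOf {J : Set R} (hJ0 : (0:R) ∈ J) {k : G} {v : R}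
    (h1 : v ∈ P.D k) (h2 : v ∈ J) : Finsupp.single k v ∈ P.skewOf J := by
  intro g
  rcases eq_or_ne g k with rfl | hne
  · rw [Finsupp.single_eq_same]; exact ⟨h1, h2⟩
  · rw [Finsupp.single_eq_of_ne' (Ne.symm hne)]; exact ⟨P.zero_mem g, hJ0⟩

theorem skew_term_mem {J : Set R} (hJ : P.IsInvIdeal J) {g h : G} {x y : R}
    (hx : x ∈ P.D g) (hy : y ∈ P.D h) (hmem : x ∈ J ∨ y ∈ J) :
    P.skewMul (Finsupp.single g x) (Finsupp.single h y) ∈ P.skewOf J := by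
  rw [P.skewMul_single]
  by_cases p : 𝔾.s g = 𝔾.r h
  · rw [dif_pos p]
    have hzD := P.prod_mem g h p hx hy
    have hzJ : P.act (𝔾.inv g) x * y ∈ J := by
      rcases hmem with hxJ | hyJ
      · have : P.act (𝔾.inv g) x ∈ J := hJ.2 (𝔾.inv g) x ⟨by rw [𝔾.inv_inv]; exact hx, hxJ⟩
        exact (hJ.1.2.2.2 _ this y).1
      · exact (hJ.1.2.2.2 y hyJ _).2
    exact P.single_mem_skewOf hJ.1.1 (P.skew_coeff_mem g h p hzD.1 hzD.2)
      (hJ.2 g _ ⟨hzD.1, hzJ⟩)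
  · rw [dif_neg p]
    intro k
    exact ⟨P.zero_mem k, hJ.1.1⟩

theorem skewOf_isSkewIdeal {J : Set R} (hJ : P.IsInvIdeal J) :
    P.IsSkewIdeal (P.skewOf J) := by
  have h0 : (0:G→₀R) ∈ P.skewOf J := fun g => ⟨P.zero_mem g, hJ.1.1⟩
  have hadd : ∀ x ∈ P.skewOf J, ∀ y ∈ P.skewOf J, x + y ∈ P.skewOf J := by
    intro a ha b hb g
    rw [Finsupp.add_apply]
    exact ⟨P.add_mem _ _ (ha g).1 _ (hb g).1, hJ.1.2.1 _ (ha g).2 _ (hb g).2⟩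
  refine ⟨fun a ha g => (ha g).1, h0, hadd, ?_, ?_⟩
  · intro a ha g
    rw [Finsupp.neg_apply]
    exact ⟨P.neg_mem _ _ (ha g).1, hJ.1.2.2.1 _ (ha g).2⟩
  · intro a ha y hy
    constructor
    · rw [P.skewMul_eq_sum]
      refine sum_mem_set h0 hadd _ _ fun g _ => ?_
      refine sum_mem_set h0 hadd _ _ fun h _ => ?_
      exact P.skew_term_mem hJ (ha g).1 (hy h) (Or.inl (ha g).2)
    · rw [P.skewMul_eq_sum]
      refine sum_mem_set h0 hadd _ _ fun g _ => ?_
      refine sum_mem_set h0 hadd _ _ fun h _ => ?_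
      exact P.skew_term_mem hJ (hy g) (ha h).1 (Or.inr (ha h).2)

theorem eq_bot_of_skewOf (hds : P.directSum) (hsu : ∀ g, IsSUnitalSet (P.D g)) {J : Set R}
    (hJ0 : (0:R) ∈ J) (hJmul : ∀ x ∈ J, ∀ y : R, x * y ∈ J) (h : P.skewOf J = {0}) :
    J = {0} := by
  refine Set.eq_singleton_iff_unique_mem.mpr ⟨hJ0, ?_⟩
  intro x hxJ
  obtain ⟨f, hfd, hfT⟩ := P.decomp_exists hds x
  have hcomp : ∀ e, f e = 0 := by
    intro e
    by_cases hes : e ∈ f.support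
    · have he := hfd.2 e hes
      obtain ⟨⟨u, hu, hfu⟩, -⟩ := hsu e (f e) (hfd.1 e)
      have hxu : x * u = f e := by
        rw [← hfT, show Tsum G R f = f.support.sum (fun e' => f e') from rfl, Finset.sum_mul,
          Finset.sum_eq_single e (fun e' he' hne => ?_) (fun hne => absurd hes hne)]
        · exact hfu
        · exact P.D_disjoint hds (hfd.2 e' he') he hne
            (P.D_mul_mem (hfd.2 e' he') (hfd.1 e') u).1
            (P.D_mul_mem he hu (f e')).2
      have hfeJ : f e ∈ J := by rw [← hxu]; exact hJmul x hxJ u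
      have hsingle : Finsupp.single e (f e) ∈ P.skewOf J :=
        P.single_mem_skewOf hJ0 (hfd.1 e) hfeJ
      rw [h] at hsingle
      have := congrArg (fun u : G →₀ R => u e) (Set.mem_singleton_iff.mp hsingle)
      simpa using this
    · exact Finsupp.notMem_support_iff.mp hes
  have hf0 : f = 0 := Finsupp.ext hcomp
  rw [← hfT, hf0, map_zero]

theorem eq_univ_of_skewOf (hds : P.directSum) {J : Set R} (hJ0 : (0:R) ∈ J)
    (hJadd : ∀ x ∈ J, ∀ y ∈ J, x + y ∈ J) (h : P.skewOf J = P.carrier) :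
    J = Set.univ := by
  refine Set.eq_univ_iff_forall.mpr fun x => ?_
  obtain ⟨f, hfd, hfT⟩ := P.decomp_exists hds x
  rw [← hfT, show Tsum G R f = f.support.sum (fun e => f e) from rfl]
  refine sum_mem_set hJ0 hJadd _ _ fun e _ => ?_
  have : Finsupp.single e (f e) ∈ P.skewOf J := by
    rw [h]; exact P.single_mem_carrier (hfd.1 e)
  have := (this e).2
  rwa [Finsupp.single_eq_same] at this

end PartialAction

end Aux4
section Aux5

namespace PartialAction

variable {G R : Type*} [NonUnitalRing R] {𝔾 : DGroupoid G} (P : PartialAction 𝔾 R)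

theorem skewOf_mul_zero {I J : Set R} (hI : P.IsInvIdeal I)
    (hIJ : ∀ x ∈ I, ∀ y ∈ J, x * y = 0) :
    ∀ a ∈ P.skewOf I, ∀ b ∈ P.skewOf J, P.skewMul a b = 0 := by
  intro a ha b hb
  rw [P.skewMul_eq_sum]
  refine Finset.sum_eq_zero fun g _ => Finset.sum_eq_zero fun h _ => ?_
  rw [P.skewMul_single]
  by_cases p : 𝔾.s g = 𝔾.r h
  · rw [dif_pos p]
    have hact : P.act (𝔾.inv g) (a g) ∈ I :=
      hI.2 (𝔾.inv g) (a g) ⟨by rw [𝔾.inv_inv]; exact (ha g).1, (ha g).2⟩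
    rw [hIJ _ hact _ (hb h).2, P.act_zero, Finsupp.single_zero]
  · rw [dif_neg p]

theorem carrier_sub (hsu : ∀ g, IsSUnitalSet (P.D g)) (hds : P.directSum)
    {I : Set (G →₀ R)} (hI : P.IsSkewIdeal I)
    (huniv : P.liftIdeal I = Set.univ) : I = P.carrier := by
  refine Set.Subset.antisymm hI.1 fun b hb => ?_
  have hrep : b.support.sum (fun g => Finsupp.single g (b g)) = b := Finsupp.sum_single b
  rw [← hrep]
  refine sum_mem_set hI.2.1 hI.2.2.1 _ _ fun g _ => ?_
  obtain ⟨-, v, hv, hvx⟩ := hsu g (b g) (hb g)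
  have hvr : v ∈ P.D (𝔾.r g) := P.subset_r g hv
  have hvlift : v ∈ P.liftIdeal I := by rw [huniv]; trivial
  have hsv : Finsupp.single (𝔾.r g) v ∈ I :=
    P.single_mem_of_lift hds (𝔾.unit_of_r g) hvr hvlift
  have hcalc : P.skewMul (Finsupp.single (𝔾.r g) v) (Finsupp.single g (b g))
      = Finsupp.single g (b g) := by
    rw [P.skewMul_single]
    have p : 𝔾.s (𝔾.r g) = 𝔾.r g := 𝔾.s_of_r g
    rw [dif_pos p, 𝔾.id_mul g p, 𝔾.unit_inv (𝔾.unit_of_r g),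
      P.act_unit _ (𝔾.unit_of_r g) v hvr, hvx,
      P.act_unit _ (𝔾.unit_of_r g) (b g) (P.subset_r g (hb g))]
  rw [← hcalc]
  exact (hI.2.2.2.2 _ hsv _ (P.single_mem_carrier (hb g))).1

end PartialAction

end Aux5
/-- **Statement 13.** (i) If `R ⋊_α G` is prime, then `R` is `G`-prime.
(ii) If `α` has the intersection property, then `R` is `G`-prime iff `R ⋊_α G` is prime.
(iii) `R` is `G`-simple and `α` has the intersection property iff `R ⋊_α G` is simple. -/
theorem prime_simple_characterizations {G R : Type*} [NonUnitalRing R]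
    (𝔾 : DGroupoid G) (P : PartialAction 𝔾 R)
    (hsu : ∀ g, IsSUnitalSet (P.D g)) (hds : P.directSum) :
    (P.SkewPrime → P.GPrime) ∧
    (P.HasIntersectionProperty → (P.GPrime ↔ P.SkewPrime)) ∧
    ((P.GSimple ∧ P.HasIntersectionProperty) ↔ P.SkewSimple) := by
  classical
  have part1 : P.SkewPrime → P.GPrime := by
    intro hSP I J hI hJ hIJ
    rcases hSP (P.skewOf I) (P.skewOf J) (P.skewOf_isSkewIdeal hI) (P.skewOf_isSkewIdeal hJ)
        (P.skewOf_mul_zero hI hIJ) with h | h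
    · exact Or.inl (P.eq_bot_of_skewOf hds hsu hI.1.1 (fun x hx y => (hI.1.2.2.2 x hx y).1) h)
    · exact Or.inr (P.eq_bot_of_skewOf hds hsu hJ.1.1 (fun x hx y => (hJ.1.2.2.2 x hx y).1) h)
  refine ⟨part1, fun hip => ⟨?_, part1⟩, ?_, ?_⟩
  · -- GPrime → SkewPrime given the intersection property
    intro hGP I J hI hJ hIJ
    by_contra hcon
    push_neg at hcon
    obtain ⟨hIne, hJne⟩ := hcon
    rcases hGP _ _ (P.lift_isInv hsu hds hI) (P.lift_isInv hsu hds hJ)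
        (P.lift_mul_zero hds hIJ) with h | h
    · exact P.lift_ne_bot hds hI.2.1 (hip I hI hIne) h
    · exact P.lift_ne_bot hds hJ.2.1 (hip J hJ hJne) h
  · -- GSimple ∧ intersection property → SkewSimple
    rintro ⟨hGS, hip⟩ I hI
    rcases eq_or_ne I {0} with h | h
    · exact Or.inl h
    · right
      have h1 : P.liftIdeal I ≠ {0} := P.lift_ne_bot hds hI.2.1 (hip I hI h)
      have h2 : P.liftIdeal I = Set.univ := (hGS _ (P.lift_isInv hsu hds hI)).resolve_left h1
      exact P.carrier_sub hsu hds hI h2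
  · -- SkewSimple → GSimple ∧ intersection property
    intro hSS
    constructor
    · intro J hJ
      rcases hSS _ (P.skewOf_isSkewIdeal hJ) with h | h
      · exact Or.inl (P.eq_bot_of_skewOf hds hsu hJ.1.1 (fun x hx y => (hJ.1.2.2.2 x hx y).1) h)
      · exact Or.inr (P.eq_univ_of_skewOf hds hJ.1.1 hJ.1.2.1 h)
    · intro I hI hIne
      have hIc : I = P.carrier := (hSS I hI).resolve_left hIne
      have hex : ∃ b ∈ I, b ≠ 0 := by
        by_contra hcon
        push_neg at hcon
        exact hIne (Set.eq_singleton_iff_unique_mem.mpr ⟨hI.2.1, hcon⟩)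
      obtain ⟨b, hbI, hbne⟩ := hex
      have hbc : b ∈ P.carrier := hI.1 hbI
      obtain ⟨g, hg⟩ : ∃ g, b g ≠ 0 := by
        by_contra hcon
        push_neg at hcon
        exact hbne (Finsupp.ext hcon)
      intro hcon2
      have hmem : Finsupp.single (𝔾.r g) (b g) ∈ I ∩ P.diag := by
        constructor
        · rw [hIc]; exact P.single_mem_carrier (P.subset_r g (hbc g))
        · exact P.single_mem_diag (𝔾.unit_of_r g) (P.subset_r g (hbc g))
      rw [hcon2] at hmem
      have h0 : Finsupp.single (𝔾.r g) (b g) = 0 := Set.mem_singleton_iff.mp hmem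
      have h1 := congrArg (fun u : G →₀ R => u (𝔾.r g)) h0
      rw [show Finsupp.single (𝔾.r g) (b g) (𝔾.r g)
        = b g from Finsupp.single_eq_same] at h1
      exact hg h1
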